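/- Let D_1, …, D_m be linearly ordered sets and let X = D_1 × ⋯ × D_m. Let R be the family of all subsets of X of the form {x ∈ X : x_i ≤ a} or {x ∈ X : x_i ≥ a}, for some coordinate index i ∈ {1,…,m} and some a ∈ D_i. Then the VC-dimension of the range space (X, R) is at most m+1; that is, no finite subset of X of cardinality m+2 is shattered by R. -/

import Mathlib

/-- A set `A` is shattered by the range family `R` if every subset of `A`
is obtained as the intersection of `A` with some range. -/
def Shatters {X : Type*} (R : Set (Set X)) (A : Set X) : Prop :=
  ∀ B ⊆ A, ∃ r ∈ R, A ∩ r = B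

/-- The ranges on `X = D₁ × ⋯ × D_m` given by single-clause selection queries
`{x : x_i ≤ a}` or `{x : x_i ≥ a}`. -/
def selectRanges {m : ℕ} (D : Fin m → Type*) [∀ i, LinearOrder (D i)] :
    Set (Set (∀ i, D i)) :=
  {s | ∃ (i : Fin m) (a : D i), s = {x | x i ≤ a} ∨ s = {x | a ≤ x i}}

private lemma vc_aux (m : ℕ) : 2 * m * (m + 1) + 2 < 2 ^ (m + 2) := by
  induction m with
  | zero => norm_num
  | succ k ih =>
    rcases Nat.lt_or_ge k 2 with hk | hk
    · interval_cases k <;> norm_num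
    · have h2 : 2 ^ (k + 1 + 2) = 2 * 2 ^ (k + 2) := by ring
      rw [h2]
      nlinarith [ih, hk]


/-- The range space of single-clause selection queries on a table with `m` linearly
ordered columns has VC-dimension at most `m + 1`: no set of `m + 2` tuples is shattered. -/
theorem vcdim_selectRanges {m : ℕ} (D : Fin m → Type*) [∀ i, LinearOrder (D i)] :
    ∀ A : Finset (∀ i, D i), A.card = m + 2 →
      ¬ Shatters (selectRanges D) (A : Set (∀ i, D i)) := by
  classical
  intro A hcard h
  have hA : A.Nonempty := by
    rw [← Finset.card_pos, hcard]; omega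
  by_cases hm0 : m = 0
  · obtain ⟨r, hr, -⟩ := h ∅ (Set.empty_subset _)
    obtain ⟨i, -, -⟩ := hr
    have := i.2; omega
  have i0 : Fin m := ⟨0, Nat.pos_of_ne_zero hm0⟩
  -- key extraction lemma
  have key : ∀ B : Finset (∀ i, D i), B ⊆ A → B.Nonempty → B ≠ A →
      ∃ z : (Fin m × Bool) × (∀ i, D i),
        z.2 ∈ A ∧
        (∃ q ∈ A, if z.1.2 then z.2 z.1.1 < q z.1.1 else q z.1.1 < z.2 z.1.1) ∧
        B = A.filter (fun x => if z.1.2 then x z.1.1 ≤ z.2 z.1.1 else z.2 z.1.1 ≤ x z.1.1) := by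
    intro B hBA hBne hBneq
    obtain ⟨r, hr, hint⟩ := h (B : Set _) (by exact_mod_cast hBA)
    have hmem : ∀ x, (x ∈ A ∧ x ∈ r) ↔ x ∈ B := by
      intro x
      have := Set.ext_iff.mp hint x
      simpa using this
    obtain ⟨q, hqA, hqB⟩ := Finset.exists_of_ssubset (hBA.ssubset_of_ne hBneq)
    obtain ⟨i, a, hra | hra⟩ := hr
    · obtain ⟨p, hpB, hpmax⟩ := B.exists_max_image (fun x => x i) hBne
      have hpa : p i ≤ a := by
        have := (hmem p).mpr hpB
        rw [hra] at this; exact this.2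
      have hq : a < q i := by
        by_contra hle
        exact hqB ((hmem q).mp ⟨hqA, by rw [hra]; exact not_lt.mp hle⟩)
      refine ⟨((i, true), p), hBA hpB, ⟨q, hqA, by simpa using lt_of_le_of_lt hpa hq⟩, ?_⟩
      ext x
      simp only [Finset.mem_filter, if_true]
      constructor
      · intro hx; exact ⟨hBA hx, hpmax x hx⟩
      · rintro ⟨hxA, hxle⟩
        exact (hmem x).mp ⟨hxA, by rw [hra]; exact le_trans hxle hpa⟩
    · obtain ⟨p, hpB, hpmin⟩ := B.exists_min_image (fun x => x i) hBne
      have hpa : a ≤ p i := by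
        have := (hmem p).mpr hpB
        rw [hra] at this; exact this.2
      have hq : q i < a := by
        by_contra hle
        exact hqB ((hmem q).mp ⟨hqA, by rw [hra]; exact not_lt.mp hle⟩)
      refine ⟨((i, false), p), hBA hpB, ⟨q, hqA, by simpa using lt_of_lt_of_le hq hpa⟩, ?_⟩
      ext x
      simp only [Finset.mem_filter, if_false]
      constructor
      · intro hx; exact ⟨hBA hx, hpmin x hx⟩
      · rintro ⟨hxA, hxle⟩
        exact (hmem x).mp ⟨hxA, by rw [hra]; exact le_trans hpa hxle⟩
  -- the injection
  set f : Finset (∀ i, D i) → (Fin m × Bool) × (∀ i, D i) :=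
    fun B => if hB : B ⊆ A ∧ B.Nonempty ∧ B ≠ A then
      (key B hB.1 hB.2.1 hB.2.2).choose else ((i0, true), hA.choose) with hf
  have hfspec : ∀ B (h1 : B ⊆ A) (h2 : B.Nonempty) (h3 : B ≠ A),
      (f B).2 ∈ A ∧
      (∃ q ∈ A, if (f B).1.2 then (f B).2 (f B).1.1 < q (f B).1.1
        else q (f B).1.1 < (f B).2 (f B).1.1) ∧
      B = A.filter (fun x => if (f B).1.2 then x (f B).1.1 ≤ (f B).2 (f B).1.1
        else (f B).2 (f B).1.1 ≤ x (f B).1.1) := by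
    intro B h1 h2 h3
    have he : f B = (key B h1 h2 h3).choose := by
      rw [hf]; exact dif_pos ⟨h1, h2, h3⟩
    rw [he]
    exact (key B h1 h2 h3).choose_spec
  set S : Finset (Finset (∀ i, D i)) := A.powerset \ {∅, A} with hSdef
  set T : Finset ((Fin m × Bool) × (∀ i, D i)) :=
    (Finset.univ ×ˢ A).filter
      (fun z => ∃ q ∈ A, if z.1.2 then z.2 z.1.1 < q z.1.1 else q z.1.1 < z.2 z.1.1) with hTdef
  have hSmem : ∀ B ∈ S, B ⊆ A ∧ B.Nonempty ∧ B ≠ A := by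
    intro B hB
    rw [hSdef, Finset.mem_sdiff, Finset.mem_powerset] at hB
    obtain ⟨h1, h2⟩ := hB
    simp only [Finset.mem_insert, Finset.mem_singleton] at h2
    push_neg at h2
    exact ⟨h1, h2.1, h2.2⟩
  have hmaps : ∀ B ∈ S, f B ∈ T := by
    intro B hB
    obtain ⟨h1, h2, h3⟩ := hSmem B hB
    obtain ⟨hz2, hzq, -⟩ := hfspec B h1 h2 h3
    rw [hTdef, Finset.mem_filter, Finset.mem_product]
    exact ⟨⟨Finset.mem_univ _, hz2⟩, hzq⟩
  have hinj : Set.InjOn f ↑S := by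
    intro B hB B' hB' heq
    rw [Finset.mem_coe] at hB hB'
    obtain ⟨h1, h2, h3⟩ := hSmem B hB
    obtain ⟨h1', h2', h3'⟩ := hSmem B' hB'
    rw [(hfspec B h1 h2 h3).2.2, (hfspec B' h1' h2' h3').2.2, heq]
  have hle := Finset.card_le_card_of_injOn f hmaps hinj
  -- card of S
  have hScard : S.card = 2 ^ (m + 2) - 2 := by
    have hsub : ({∅, A} : Finset (Finset (∀ i, D i))) ⊆ A.powerset := by
      intro x hx
      simp only [Finset.mem_insert, Finset.mem_singleton] at hx
      rcases hx with rfl | rfl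
      · exact Finset.empty_mem_powerset _
      · exact Finset.mem_powerset_self _
    have h2 : ({∅, A} : Finset (Finset (∀ i, D i))).card = 2 := by
      rw [Finset.card_insert_of_notMem (by
        simp only [Finset.mem_singleton]
        exact fun hc => hA.ne_empty hc.symm), Finset.card_singleton]
    rw [hSdef, Finset.card_sdiff_of_subset hsub, Finset.card_powerset, hcard, h2]
  -- card of T
  have hw : ∀ d : Fin m × Bool, ∃ w ∈ A, ∀ q ∈ A,
      if d.2 then q d.1 ≤ w d.1 else w d.1 ≤ q d.1 := by
    intro d
    cases hd : d.2
    · obtain ⟨w, hwA, hwmin⟩ := A.exists_min_image (fun x => x d.1) hA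
      exact ⟨w, hwA, fun q hq => by simpa using hwmin q hq⟩
    · obtain ⟨w, hwA, hwmax⟩ := A.exists_max_image (fun x => x d.1) hA
      exact ⟨w, hwA, fun q hq => by simpa using hwmax q hq⟩
  choose w hwA hwext using hw
  have hTsub : T ⊆ Finset.univ.biUnion
      (fun d : Fin m × Bool => {d} ×ˢ (A.erase (w d))) := by
    intro z hz
    rw [hTdef, Finset.mem_filter, Finset.mem_product] at hz
    obtain ⟨⟨-, hz2⟩, q, hqA, hq⟩ := hz
    rw [Finset.mem_biUnion]
    refine ⟨z.1, Finset.mem_univ _, ?_⟩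
    rw [Finset.mem_product]
    refine ⟨Finset.mem_singleton_self _, Finset.mem_erase.mpr ⟨?_, hz2⟩⟩
    intro hzw
    have hext := hwext z.1 q hqA
    cases hb : z.1.2
    · rw [hb] at hq hext
      simp only [Bool.false_eq_true, if_false] at hq hext
      rw [hzw] at hq
      exact absurd hext (not_le.mpr hq)
    · rw [hb] at hq hext
      simp only [if_true] at hq hext
      rw [hzw] at hq
      exact absurd hext (not_le.mpr hq)
  have hTcard : T.card ≤ 2 * m * (m + 1) := by
    calc T.card ≤ (Finset.univ.biUnion
        (fun d : Fin m × Bool => {d} ×ˢ (A.erase (w d)))).card :=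
          Finset.card_le_card hTsub
      _ ≤ ∑ d : Fin m × Bool, ({d} ×ˢ (A.erase (w d))).card :=
          Finset.card_biUnion_le
      _ = ∑ d : Fin m × Bool, (m + 1) := by
          apply Finset.sum_congr rfl
          intro d _
          rw [Finset.card_product, Finset.card_singleton, one_mul,
            Finset.card_erase_of_mem (hwA d), hcard]
          omega
      _ = 2 * m * (m + 1) := by
          rw [Finset.sum_const, Finset.card_univ, smul_eq_mul]
          simp [Fintype.card_prod, Fintype.card_bool]
          ring
  have haux := vc_aux m
  rw [hScard] at hle
  have hpow : 2 ≤ 2 ^ (m + 2) := by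
    calc 2 = 2 ^ 1 := by norm_num
      _ ≤ 2 ^ (m + 2) := Nat.pow_le_pow_right (by norm_num) (by omega)
  omega
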